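/- Let L be a first-order language and let G be a group that is also an L-structure. Let X be a compact topological space with a basis ℬ, and let ρ be the σ-topology on X generated by ℬ (so every ρ-set is open in X). Suppose G acts on X by an action · : G × X → X that is σ-continuous, i.e., for every U ∈ ρ the set {(g, x) ∈ G × X : g·x ∈ U} is a countable union ⋃_{i<ω} Φ_i × U_i with each Φ_i a definable subset of G and each U_i ∈ ρ. Let f : X → ℝ be σ-continuous with respect to ρ. Then for every ζ ∈ X, the function g ↦ f(g·ζ) from G to ℝ is logically right uniformly continuous. -/

import Mathlib

open FirstOrder

/-- A function `f : G → ℝ` on a group `G` that is an `L`-structure is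
logically right uniformly continuous if for every `ε > 0` there is a countable
cover of `G` by definable sets `Θ n` (with parameters from `G`) such that whenever
`g₁, g₂` lie in the same `Θ n`, then `|f (g₁ * h) - f (g₂ * h)| < ε` for all `h`. -/
def LRUC {G : Type*} [Group G] (L : Language) [L.Structure G] (f : G → ℝ) : Prop :=
  ∀ ε : ℝ, 0 < ε → ∃ Θ : ℕ → Set G,
    (∀ n : ℕ, (Set.univ : Set G).Definable₁ L (Θ n)) ∧
    (⋃ n, Θ n) = Set.univ ∧
    ∀ n : ℕ, ∀ g₁ ∈ Θ n, ∀ g₂ ∈ Θ n, ∀ h : G, |f (g₁ * h) - f (g₂ * h)| < ε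

/-- The σ-topology generated by a family `B` of subsets of `X`. -/
inductive SigmaGen {X : Type*} (B : Set (Set X)) : Set X → Prop
  | basic : ∀ s ∈ B, SigmaGen B s
  | empty : SigmaGen B ∅
  | univ : SigmaGen B Set.univ
  | inter : ∀ s t : Set X, SigmaGen B s → SigmaGen B t → SigmaGen B (s ∩ t)
  | iUnion : ∀ f : ℕ → Set X, (∀ n, SigmaGen B (f n)) → SigmaGen B (⋃ n, f n)

/-- Every set in the σ-topology generated by a topological basis is open. -/
lemma SigmaGen.isOpen {X : Type*} [TopologicalSpace X] {B : Set (Set X)}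
    (hB : TopologicalSpace.IsTopologicalBasis B) {s : Set X} (h : SigmaGen B s) :
    IsOpen s := by
  induction h with
  | basic s hs => exact hB.isOpen hs
  | empty => exact isOpen_empty
  | univ => exact isOpen_univ
  | inter s t _ _ hs ht => exact hs.inter ht
  | iUnion f _ hf => exact isOpen_iUnion hf

/-- Definable₁ is closed under finite intersections over a `Finset`. -/
lemma definable₁_finset_biInter {G : Type*} (L : Language) [L.Structure G]
    {ι : Type*} (F : Finset ι) (Φ : ι → Set G)
    (hΦ : ∀ i, (Set.univ : Set G).Definable₁ L (Φ i)) :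
    (Set.univ : Set G).Definable₁ L (⋂ i ∈ F, Φ i) := by
  have : { x : Fin 1 → G | x 0 ∈ ⋂ i ∈ F, Φ i } =
      ⋂ i ∈ F, { x : Fin 1 → G | x 0 ∈ Φ i } := by
    ext x; simp
  unfold Set.Definable₁
  rw [this]
  exact Set.definable_biInter_finset (fun i => hΦ i) F

/-- If a group `G` acts σ-continuously on a compact space `X` and `f : X → ℝ` is
σ-continuous, then `g ↦ f (g • ζ)` is logically right uniformly continuous. -/
theorem lruc_of_sigma_continuous_action {G : Type*} [Group G] (L : Language)
    [L.Structure G] {X : Type*} [TopologicalSpace X] [CompactSpace X]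
    (B : Set (Set X)) (hB : TopologicalSpace.IsTopologicalBasis B)
    (act : G → X → X)
    (hone : ∀ x : X, act 1 x = x)
    (hmul : ∀ (g h : G) (x : X), act (g * h) x = act g (act h x))
    (hcont : ∀ U : Set X, SigmaGen B U →
      ∃ (Φ : ℕ → Set G) (V : ℕ → Set X),
        (∀ i : ℕ, (Set.univ : Set G).Definable₁ L (Φ i)) ∧
        (∀ i : ℕ, SigmaGen B (V i)) ∧
        {p : G × X | act p.1 p.2 ∈ U} = ⋃ i : ℕ, Φ i ×ˢ V i)
    (f : X → ℝ) (hf : ∀ U : Set ℝ, IsOpen U → SigmaGen B (f ⁻¹' U))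
    (ζ : X) :
    LRUC L (fun g : G => f (act g ζ)) := by
  intro ε hε
  classical
  -- enumeration of the integers
  let e : ℕ ≃ ℤ := (Denumerable.eqv ℤ).symm
  -- intervals of length ε covering ℝ
  set J : ℕ → Set ℝ := fun n => Set.Ioo (((e n : ℤ) - 1) * (ε / 2)) (((e n : ℤ) + 1) * (ε / 2))
    with hJ
  have hJcover : ∀ r : ℝ, ∃ n, r ∈ J n := by
    intro r
    have hε2 : (0 : ℝ) < ε / 2 := by linarith
    refine ⟨e.symm ⌊r / (ε / 2)⌋, ?_⟩
    simp only [hJ, Equiv.apply_symm_apply, Set.mem_Ioo]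
    have h1 : (⌊r / (ε / 2)⌋ : ℝ) ≤ r / (ε / 2) := Int.floor_le _
    have h2 : r / (ε / 2) < ⌊r / (ε / 2)⌋ + 1 := Int.lt_floor_add_one _
    constructor
    · push_cast
      rw [sub_mul]
      have := (mul_le_mul_iff_of_pos_right hε2).2 h1
      rw [div_mul_cancel₀ r hε2.ne'] at this
      linarith
    · push_cast
      rw [add_mul]
      have := (mul_lt_mul_iff_of_pos_right hε2).2 h2
      rw [div_mul_cancel₀ r hε2.ne'] at this
      linarith
  have hJlen : ∀ n, ∀ a ∈ J n, ∀ b ∈ J n, |a - b| < ε := by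
    intro n a ha b hb
    simp only [hJ, Set.mem_Ioo] at ha hb
    rw [abs_sub_lt_iff]
    constructor <;> nlinarith [ha.1, ha.2, hb.1, hb.2]
  -- preimages and σ-continuity data
  have hU : ∀ n, SigmaGen B (f ⁻¹' J n) := fun n => hf _ isOpen_Ioo
  choose Φ V hΦdef hVsig hEq using fun n => hcont (f ⁻¹' J n) (hU n)
  have hVopen : ∀ n i, IsOpen (V n i) := fun n i => (hVsig n i).isOpen hB
  have hmem : ∀ (k : ℕ) (g : G) (x : X), f (act g x) ∈ J k ↔ ∃ i, g ∈ Φ k i ∧ x ∈ V k i := by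
    intro k g x
    have := Set.ext_iff.1 (hEq k) (g, x)
    simpa [Set.mem_iUnion, Set.mem_prod] using this
  -- candidate sets indexed by finite sets of pairs
  let S : Finset (ℕ × ℕ) → Set G := fun F =>
    if (⋃ p ∈ F, V p.1 p.2) = Set.univ then ⋂ p ∈ F, Φ p.1 p.2 else ∅
  obtain ⟨σ, hσ⟩ := exists_surjective_nat (Finset (ℕ × ℕ))
  refine ⟨fun n => S (σ n), ?_, ?_, ?_⟩
  · -- definability
    intro n
    by_cases hc : (⋃ p ∈ σ n, V p.1 p.2) = Set.univ
    · simpa [S, hc] using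
        definable₁_finset_biInter L (σ n) (fun p => Φ p.1 p.2) (fun p => hΦdef p.1 p.2)
    · have hS : S (σ n) = ∅ := by simp [S, hc]
      show (Set.univ : Set G).Definable₁ L (S (σ n))
      rw [hS]
      unfold Set.Definable₁
      have : { x : Fin 1 → G | x 0 ∈ (∅ : Set G) } = ∅ := by ext x; simp
      rw [this]
      exact Set.definable_empty
  · -- covering
    rw [Set.eq_univ_iff_forall]
    intro g
    -- the sets V k i with g ∈ Φ k i form an open cover of X
    have hcov : (Set.univ : Set X) ⊆
        ⋃ q : {p : ℕ × ℕ // g ∈ Φ p.1 p.2}, V q.1.1 q.1.2 := by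
      intro x _
      obtain ⟨k, hk⟩ := hJcover (f (act g x))
      obtain ⟨i, hgi, hxi⟩ := (hmem k g x).1 hk
      exact Set.mem_iUnion.2 ⟨⟨(k, i), hgi⟩, hxi⟩
    obtain ⟨t, ht⟩ := isCompact_univ.elim_finite_subcover
      (fun q : {p : ℕ × ℕ // g ∈ Φ p.1 p.2} => V q.1.1 q.1.2)
      (fun q => hVopen q.1.1 q.1.2) hcov
    set F : Finset (ℕ × ℕ) := t.image Subtype.val with hF
    have hFcov : (⋃ p ∈ F, V p.1 p.2) = Set.univ := by
      apply Set.eq_univ_of_univ_subset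
      intro x hx
      obtain ⟨q, hqt, hxq⟩ := Set.mem_iUnion₂.1 (ht hx)
      exact Set.mem_iUnion₂.2 ⟨q.1, Finset.mem_image_of_mem _ hqt, hxq⟩
    have hgF : g ∈ ⋂ p ∈ F, Φ p.1 p.2 := by
      refine Set.mem_iInter₂.2 fun p hp => ?_
      obtain ⟨q, _, rfl⟩ := Finset.mem_image.1 hp
      exact q.2
    obtain ⟨n, hn⟩ := hσ F
    refine Set.mem_iUnion.2 ⟨n, ?_⟩
    simp only [S, hn, hFcov, if_pos]
    exact hgF
  · -- uniform estimate
    intro n g₁ hg₁ g₂ hg₂ h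
    by_cases hc : (⋃ p ∈ σ n, V p.1 p.2) = Set.univ
    · simp only [S, hc, if_pos] at hg₁ hg₂
      have hx : act h ζ ∈ ⋃ p ∈ σ n, V p.1 p.2 := hc ▸ Set.mem_univ _
      obtain ⟨p, hp, hxp⟩ := Set.mem_iUnion₂.1 hx
      have h₁ : f (act g₁ (act h ζ)) ∈ J p.1 :=
        (hmem p.1 g₁ (act h ζ)).2 ⟨p.2, Set.mem_iInter₂.1 hg₁ p hp, hxp⟩
      have h₂ : f (act g₂ (act h ζ)) ∈ J p.1 :=
        (hmem p.1 g₂ (act h ζ)).2 ⟨p.2, Set.mem_iInter₂.1 hg₂ p hp, hxp⟩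
      have e₁ : act (g₁ * h) ζ = act g₁ (act h ζ) := hmul g₁ h ζ
      have e₂ : act (g₂ * h) ζ = act g₂ (act h ζ) := hmul g₂ h ζ
      simpa [e₁, e₂] using hJlen p.1 _ h₁ _ h₂
    · simp only [S, hc, if_neg, not_false_iff] at hg₁
      exact absurd hg₁ (Set.notMem_empty g₁)
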